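/- Let d ≥ 1, let x ∈ ℂ with x ≠ 0, and let φ ∈ ℂ with Im φ ≠ 0. Then every complex zero of the polynomial z ↦ x·(1 + φ·z)^d + conj(x)·(1 + conj(φ)·z)^d is a real number. -/

import Mathlib

/-- Case `b² - 4ac < 0`: every zero of `x (1 + φz)^d + x̄ (1 + φ̄z)^d` with `x ≠ 0` and
`Im φ ≠ 0` is real. -/
theorem zeros_real_conjugate_roots (d : ℕ) (hd : 1 ≤ d) (x : ℂ) (hx : x ≠ 0)
    (φ : ℂ) (hφ : φ.im ≠ 0) :
    ∀ z : ℂ,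
      x * (1 + φ * z) ^ d + (starRingEnd ℂ) x * (1 + (starRingEnd ℂ) φ * z) ^ d = 0 →
      z.im = 0 := by
  intro z hz
  have heq : x * (1 + φ * z) ^ d = -((starRingEnd ℂ) x * (1 + (starRingEnd ℂ) φ * z) ^ d) := by
    linear_combination hz
  have habs : ‖x‖ * ‖1 + φ * z‖ ^ d
      = ‖x‖ * ‖1 + (starRingEnd ℂ) φ * z‖ ^ d := by
    have := congrArg (fun w : ℂ => ‖w‖) heq
    simpa [norm_mul, norm_pow, norm_neg, Complex.norm_conj] using this
  have hax : ‖x‖ ≠ 0 := by simpa using hx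
  have hpow : ‖1 + φ * z‖ ^ d = ‖1 + (starRingEnd ℂ) φ * z‖ ^ d :=
    mul_left_cancel₀ hax habs
  have hd0 : d ≠ 0 := by omega
  have hab : ‖1 + φ * z‖ = ‖1 + (starRingEnd ℂ) φ * z‖ :=
    (pow_left_inj₀ (by positivity) (by positivity) hd0).mp hpow
  have hns : Complex.normSq (1 + φ * z) = Complex.normSq (1 + (starRingEnd ℂ) φ * z) := by
    rw [← Complex.sq_norm, ← Complex.sq_norm, hab]
  simp [Complex.normSq_apply, Complex.add_re, Complex.add_im, Complex.mul_re,
    Complex.mul_im] at hns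
  have : φ.im * z.im = 0 := by nlinarith [hns]
  rcases mul_eq_zero.mp this with h | h
  · exact absurd h hφ
  · exact h
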